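/- Let f : {0,1}^n → {0,1} be constant on all inputs of Hamming weight less than n−k, for some k < n/2. Suppose there is a family X of subsets of [n] such that for all distinct i_1,...,i_{k+1} ∈ [n] and j ∈ [k+1] some X ∈ X contains i_j and none of the other i_ℓ. Then the map x ↦ (AND_X(x))_{X ∈ X} is injective on the set of strings of Hamming weight at least n−k; consequently (AND_X(x))_{X ∈ X} determines f(x) for all x, i.e., X is an NAADT basis for f. -/
import Mathlib


/-- `AND_S(x)` as a Boolean. -/
def andB {n : ℕ} (S : Finset (Fin n)) (x : Fin n → Bool) : Bool :=
  decide (∀ i ∈ S, x i = true)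

/-- Hamming weight of `x ∈ {0,1}^n`. -/
def wt {n : ℕ} (x : Fin n → Bool) : ℕ :=
  (Finset.univ.filter fun i => x i = true).card

lemma wt_add_zeros {n : ℕ} (x : Fin n → Bool) :
    wt x + (Finset.univ.filter fun i => x i = false).card = n := by
  have := Finset.card_filter_add_card_filter_not (s := (Finset.univ : Finset (Fin n)))
    (p := fun i => x i = true)
  simpa [wt, Bool.not_eq_true] using this

lemma key {n k : ℕ} (hk : 2 * k < n) (𝒳 : Finset (Finset (Fin n)))
    (hsep : ∀ i : Fin (k + 1) → Fin n, Function.Injective i →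
      ∀ j : Fin (k + 1), ∃ X ∈ 𝒳, i j ∈ X ∧ ∀ l : Fin (k + 1), l ≠ j → i l ∉ X)
    (x y : Fin n → Bool) (hy : n - k ≤ wt y) (hne : x ≠ y) (hle : wt x ≤ wt y) :
    ∃ X ∈ 𝒳, andB X x = false ∧ andB X y = true := by
  set Ix := Finset.univ.filter fun i => x i = false with hIx
  set Iy := Finset.univ.filter fun i => y i = false with hIy
  have hx' := wt_add_zeros x
  have hy' := wt_add_zeros y
  rw [← hIx] at hx'
  rw [← hIy] at hy'
  have hwy : wt y ≤ n := by omega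
  have hIyk : Iy.card ≤ k := by omega
  -- find i₀ ∈ Ix \ Iy
  have hi0 : ∃ i₀, i₀ ∈ Ix ∧ i₀ ∉ Iy := by
    by_contra h
    push_neg at h
    have hsub : Ix ⊆ Iy := fun i hi => h i hi
    have hcard : Iy.card ≤ Ix.card := by omega
    have heq : Ix = Iy := Finset.eq_of_subset_of_card_le hsub hcard
    apply hne
    funext i
    by_cases hyi : y i = true
    · have : i ∉ Iy := by simp [hIy, hyi]
      rw [← heq] at this
      simp [hIx] at this
      simp [this, hyi]
    · have : i ∈ Iy := by simp [hIy]; exact Bool.not_eq_true _ ▸ (by simpa using hyi)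
      rw [← heq] at this
      simp [hIx] at this
      simp [this, Bool.not_eq_true _ ▸ (by simpa using hyi : y i = false)]
  obtain ⟨i₀, hi₀x, hi₀y⟩ := hi0
  set S := insert i₀ Iy with hS
  have hScard : S.card ≤ k + 1 := le_trans (Finset.card_insert_le _ _) (by omega)
  obtain ⟨T, hST, hTcard⟩ := Finset.exists_superset_card_eq hScard
    (by simp [Fintype.card_fin]; omega)
  set e := T.equivFin with he
  set ι : Fin (k + 1) → Fin n := fun j => (e.symm (Fin.cast hTcard.symm j) : Fin n) with hι
  have hιinj : Function.Injective ι := by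
    intro a b hab
    have : e.symm (Fin.cast hTcard.symm a) = e.symm (Fin.cast hTcard.symm b) :=
      Subtype.ext hab
    have := e.symm.injective this
    exact Fin.ext (by simpa using congrArg Fin.val this)
  have hmemT : ∀ m (hm : m ∈ T), ι (Fin.cast hTcard (e ⟨m, hm⟩)) = m := by
    intro m hm
    simp [hι]
  set j₀ := Fin.cast hTcard (e ⟨i₀, hST (Finset.mem_insert_self _ _)⟩) with hj₀
  have hιj₀ : ι j₀ = i₀ := hmemT _ _
  obtain ⟨X, hX𝒳, hiX, hothers⟩ := hsep ι hιinj j₀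
  refine ⟨X, hX𝒳, ?_, ?_⟩
  · simp only [andB, decide_eq_false_iff_not]
    intro h
    have := h i₀ (hιj₀ ▸ hiX)
    simp [hIx] at hi₀x
    simp [hi₀x] at this
  · simp only [andB, decide_eq_true_eq]
    intro p hp
    by_contra hyp
    have hpIy : p ∈ Iy := by
      simp [hIy]
      exact Bool.not_eq_true _ ▸ (by simpa using hyp)
    have hpT : p ∈ T := hST (Finset.mem_insert_of_mem hpIy)
    set l := Fin.cast hTcard (e ⟨p, hpT⟩)
    have hιl : ι l = p := hmemT _ _
    have hlj : l ≠ j₀ := by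
      intro h
      have hpi : p = i₀ := by rw [← hιl, h, hιj₀]
      exact hi₀y (hpi ▸ hpIy)
    exact hothers l hlj (hιl ▸ hp)

theorem stmt18 (n k : ℕ) (hk : 2 * k < n) (f : (Fin n → Bool) → Bool)
    (hconst : ∀ x y : Fin n → Bool, wt x < n - k → wt y < n - k → f x = f y)
    (𝒳 : Finset (Finset (Fin n)))
    (hsep : ∀ i : Fin (k + 1) → Fin n, Function.Injective i →
      ∀ j : Fin (k + 1), ∃ X ∈ 𝒳, i j ∈ X ∧ ∀ l : Fin (k + 1), l ≠ j → i l ∉ X) :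
    (∀ x y : Fin n → Bool, n - k ≤ wt x → n - k ≤ wt y →
      (∀ X ∈ 𝒳, andB X x = andB X y) → x = y) ∧
    (∀ x y : Fin n → Bool, (∀ X ∈ 𝒳, andB X x = andB X y) → f x = f y) := by
  have inj : ∀ x y : Fin n → Bool, n - k ≤ wt x → n - k ≤ wt y →
      (∀ X ∈ 𝒳, andB X x = andB X y) → x = y := by
    intro x y hx hy hAND
    by_contra hne
    rcases le_total (wt x) (wt y) with h | h
    · obtain ⟨X, hX, hfx, hfy⟩ := key hk 𝒳 hsep x y hy hne h
      rw [hAND X hX, hfy] at hfx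
      exact absurd hfx (by simp)
    · obtain ⟨X, hX, hfy, hfx⟩ := key hk 𝒳 hsep y x hx (Ne.symm hne) h
      rw [← hAND X hX, hfx] at hfy
      exact absurd hfy (by simp)
  refine ⟨inj, ?_⟩
  intro x y hAND
  rcases lt_or_ge (wt x) (n - k) with hx | hx
  · rcases lt_or_ge (wt y) (n - k) with hy | hy
    · exact hconst x y hx hy
    · exfalso
      have hne : x ≠ y := fun h => by rw [h] at hx; omega
      obtain ⟨X, hX, hfx, hfy⟩ := key hk 𝒳 hsep x y hy hne (by omega)
      rw [hAND X hX, hfy] at hfx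
      exact absurd hfx (by simp)
  · rcases lt_or_ge (wt y) (n - k) with hy | hy
    · exfalso
      have hne : y ≠ x := fun h => by rw [h] at hy; omega
      obtain ⟨X, hX, hfy, hfx⟩ := key hk 𝒳 hsep y x hx hne (by omega)
      rw [← hAND X hX, hfx] at hfy
      exact absurd hfy (by simp)
    · rw [inj x y hx hy hAND]
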